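/- For every simple root α ∈ Δ: 2 − Σ_{β ∈ S⁺(α,0), ⟨β,α∨⟩ < 0} ⟨β, α∨⟩ = Σ_{β ∈ R, ⟨β,ϖ_α∨⟩ > 0} ⟨β, α∨⟩. -/
import Mathlib


open scoped RealInnerProductSpace

attribute [local instance] Classical.propDecidable

noncomputable section

/-- The coroot `α∨ = (2/⟨α,α⟩) • α` of a vector `α` in a real inner product space
(using the inner product to identify `V` with `V*`). -/
def coroot {V : Type*} [NormedAddCommGroup V] [InnerProductSpace ℝ V] (α : V) : V :=
  (2 / ⟪α, α⟫) • α

/-- A finite, reduced, irreducible, crystallographic root system in the real inner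
product space `V`.  (The Weyl group automatically acts by isometries, since the
reflections are defined via the inner product.) -/
structure IsRootSystem {V : Type*} [NormedAddCommGroup V] [InnerProductSpace ℝ V]
    (R : Finset V) : Prop where
  nonempty : R.Nonempty
  zero_not_mem : (0 : V) ∉ R
  span_eq_top : Submodule.span ℝ (R : Set V) = ⊤
  reduced : ∀ α ∈ R, ∀ t : ℝ, t • α ∈ R → t = 1 ∨ t = -1
  reflect_mem : ∀ α ∈ R, ∀ β ∈ R, β - ⟪β, coroot α⟫ • α ∈ R
  crystallographic : ∀ α ∈ R, ∀ β ∈ R, ∃ n : ℤ, ⟪β, coroot α⟫ = (n : ℝ)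
  irreducible : ∀ S : Set V, (∀ α ∈ R, ∀ β ∈ R, α ∈ S → ⟪α, β⟫ ≠ 0 → β ∈ S) →
    (∃ α ∈ R, α ∈ S) → ∀ β ∈ R, β ∈ S

/-- `Δ` is a base of simple roots for the root system `R`: it is a linearly
independent subset of `R` and every root is a nonnegative or nonpositive integral
combination of elements of `Δ`. -/
structure IsBase {V : Type*} [NormedAddCommGroup V] [InnerProductSpace ℝ V]
    (R Δ : Finset V) : Prop where
  subset : Δ ⊆ R
  indep : LinearIndependent ℝ (fun β : Δ => (β : V))
  expand : ∀ β ∈ R, (∃ c : V → ℕ, β = ∑ δ ∈ Δ, (c δ : ℝ) • δ) ∨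
    (∃ c : V → ℕ, β = -(∑ δ ∈ Δ, (c δ : ℝ) • δ))

lemma inner_coroot_self' {V : Type*} [NormedAddCommGroup V] [InnerProductSpace ℝ V]
    {α : V} (hα : α ≠ 0) : ⟪α, coroot α⟫ = 2 := by
  rw [coroot, real_inner_smul_right]
  have : ⟪α, α⟫ ≠ 0 := inner_self_ne_zero.mpr hα
  field_simp

/-- The reflection `s_α` applied to `β`. -/
def sRefl {V : Type*} [NormedAddCommGroup V] [InnerProductSpace ℝ V] (α β : V) : V :=
  β - ⟪β, coroot α⟫ • α

lemma sRefl_inner_coroot {V : Type*} [NormedAddCommGroup V] [InnerProductSpace ℝ V]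
    {α : V} (hα : α ≠ 0) (β : V) : ⟪sRefl α β, coroot α⟫ = -⟪β, coroot α⟫ := by
  rw [sRefl, inner_sub_left, real_inner_smul_left, inner_coroot_self' hα]
  ring

lemma sRefl_sRefl {V : Type*} [NormedAddCommGroup V] [InnerProductSpace ℝ V]
    {α : V} (hα : α ≠ 0) (β : V) : sRefl α (sRefl α β) = β := by
  rw [sRefl, sRefl_inner_coroot hα, sRefl, neg_smul, sub_neg_eq_add]
  abel

/-- `2 − Σ_{β∈S⁺(α,0), ⟨β,α∨⟩<0} ⟨β,α∨⟩ = Σ_{β∈R, ⟨β,ϖ_α∨⟩>0} ⟨β,α∨⟩`. -/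
theorem statement_7 {V : Type*} [NormedAddCommGroup V] [InnerProductSpace ℝ V]
    [FiniteDimensional ℝ V]
    (R Δ : Finset V) (hR : IsRootSystem R) (hΔ : IsBase R Δ)
    -- `Rp = R⁺` is the set of positive roots
    (Rp : Finset V)
    (hRp : ∀ β, β ∈ Rp ↔ β ∈ R ∧ ∃ c : V → ℕ, β = ∑ δ ∈ Δ, (c δ : ℝ) • δ)
    (α : V) (hα : α ∈ Δ)
    -- the fundamental coweight `ϖv = ϖ_α∨`
    (ϖv : V) (hϖv : ∀ β ∈ Δ, ⟪β, ϖv⟫ = if β = α then 1 else 0) :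
    2 - ∑ β ∈ Rp.filter (fun β => ⟪β, ϖv⟫ = 0 ∧ ⟪β, coroot α⟫ < 0), ⟪β, coroot α⟫ =
      ∑ β ∈ R.filter (fun β => 0 < ⟪β, ϖv⟫), ⟪β, coroot α⟫ := by
  classical
  have hαR : α ∈ R := hΔ.subset hα
  have hα0 : α ≠ 0 := fun h => hR.zero_not_mem (h ▸ hαR)
  have hαϖ : ⟪α, ϖv⟫ = 1 := by simpa using hϖv α hα
  -- (F1) the pairing with the coweight reads off the `α`-coefficient
  have coeff : ∀ c : V → ℕ, ⟪∑ δ ∈ Δ, (c δ : ℝ) • δ, ϖv⟫ = (c α : ℝ) := by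
    intro c
    rw [sum_inner, Finset.sum_eq_single α]
    · rw [real_inner_smul_left, hαϖ, mul_one]
    · intro δ hδ hne
      rw [real_inner_smul_left, hϖv δ hδ, if_neg hne, mul_zero]
    · intro h; exact absurd hα h
  have hRpnn : ∀ β ∈ Rp, 0 ≤ ⟪β, ϖv⟫ := by
    intro β hβ
    obtain ⟨-, c, hc⟩ := (hRp β).1 hβ
    rw [hc, coeff]; positivity
  -- linear independence of the base, in usable form
  have lin : ∀ g : V → ℝ, ∑ δ ∈ Δ, g δ • δ = 0 → ∀ δ ∈ Δ, g δ = 0 := by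
    intro g hg δ hδ
    exact linearIndependent_iff'.mp hΔ.indep Δ.attach (fun x => g x)
      (by rw [← hg]; exact Finset.sum_attach Δ (fun δ => g δ • δ)) ⟨δ, hδ⟩ (Finset.mem_attach _ _)
  -- (F6) `s_α` maps `R⁺ \ {α}` to itself
  have key : ∀ β ∈ Rp, β ≠ α → sRefl α β ∈ Rp := by
    intro β hβ hne
    obtain ⟨hβR, c, hc⟩ := (hRp β).1 hβ
    have hsR : sRefl α β ∈ R := hR.reflect_mem α hαR β hβR
    rcases hΔ.expand _ hsR with ⟨d, hd⟩ | ⟨d, hd⟩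
    · exact (hRp _).2 ⟨hsR, d, hd⟩
    exfalso
    rw [sRefl] at hd
    set k := ⟪β, coroot α⟫ with hkdef
    have hkα : ∑ δ ∈ Δ, (if δ = α then k else 0) • δ = k • α := by
      rw [Finset.sum_eq_single α]
      · simp
      · intro b _ hb; simp [hb]
      · intro h; exact absurd hα h
    have h0' : β + (∑ δ ∈ Δ, (d δ : ℝ) • δ) - k • α = 0 := by
      have : β - k • α + ∑ δ ∈ Δ, (d δ : ℝ) • δ = 0 := by rw [hd]; abel
      calc β + (∑ δ ∈ Δ, (d δ : ℝ) • δ) - k • α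
          = β - k • α + ∑ δ ∈ Δ, (d δ : ℝ) • δ := by abel
        _ = 0 := this
    have h0 : ∑ δ ∈ Δ, (((c δ : ℝ) + d δ) - (if δ = α then k else 0)) • δ = 0 := by
      simp only [sub_smul, add_smul]
      rw [Finset.sum_sub_distrib, Finset.sum_add_distrib, hkα, ← hc]
      exact h0'
    have hz := lin _ h0
    have hcδ : ∀ δ ∈ Δ, δ ≠ α → (c δ : ℝ) = 0 := by
      intro δ hδ hδα
      have h1 := hz δ hδ
      rw [if_neg hδα, sub_zero] at h1
      have h2 : (0:ℝ) ≤ (c δ : ℝ) := Nat.cast_nonneg _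
      have h3 : (0:ℝ) ≤ (d δ : ℝ) := Nat.cast_nonneg _
      linarith
    have hβα : β = (c α : ℝ) • α := by
      rw [hc, Finset.sum_eq_single α]
      · intro b hb hbα; rw [hcδ b hb hbα, zero_smul]
      · intro h; exact absurd hα h
    rcases hR.reduced α hαR (c α : ℝ) (by rw [← hβα]; exact hβR) with h1 | h1
    · exact hne (by rw [hβα, h1, one_smul])
    · have : (0:ℝ) ≤ (c α : ℝ) := Nat.cast_nonneg _
      linarith
  -- `α ∈ R⁺`
  have hαRp : α ∈ Rp := by
    refine (hRp α).2 ⟨hαR, fun δ => if δ = α then 1 else 0, ?_⟩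
    rw [Finset.sum_eq_single α]
    · simp
    · intro b _ hb; simp [hb]
    · intro h; exact absurd hα h
  -- (F7) the sum over all positive roots is 2
  have sum_Rp : ∑ β ∈ Rp, ⟪β, coroot α⟫ = 2 := by
    have hsαα : sRefl α α = -α := by
      rw [sRefl, inner_coroot_self' hα0, two_smul]; abel
    have herase : ∑ β ∈ Rp.erase α, ⟪β, coroot α⟫ = 0 := by
      refine Finset.sum_involution (fun β _ => sRefl α β) ?_ ?_ ?_ ?_
      · intro β _; rw [sRefl_inner_coroot hα0]; ring
      · intro β hβ hne h
        apply hne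
        have h' : sRefl α β = β := h
        have h2 : ⟪sRefl α β, coroot α⟫ = -⟪β, coroot α⟫ := sRefl_inner_coroot hα0 β
        rw [h'] at h2
        linarith
      · intro β hβ
        obtain ⟨hβα, hβRp⟩ := Finset.mem_erase.mp hβ
        refine Finset.mem_erase.mpr ⟨?_, key β hβRp hβα⟩
        intro h
        have h' : sRefl α β = α := h
        have hb : β = -α := by
          have := (sRefl_sRefl hα0 β).symm
          rw [h', hsαα] at this
          exact this
        have h1 := hRpnn β hβRp
        rw [hb, inner_neg_left, hαϖ] at h1
        linarith
      · intro β _; exact sRefl_sRefl hα0 β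
    rw [← Finset.add_sum_erase _ _ hαRp, herase, inner_coroot_self' hα0, add_zero]
  -- (F8) on `S⁺(α,0)` the pairing with `α∨` is nonpositive
  have hF8 : ∀ β ∈ Rp, ⟪β, ϖv⟫ = 0 → ⟪β, coroot α⟫ ≤ 0 := by
    intro β hβ h0
    by_contra hpos
    push_neg at hpos
    have hβα : β ≠ α := by
      intro h; rw [h, hαϖ] at h0; norm_num at h0
    have hs := hRpnn _ (key β hβ hβα)
    have hϖs : ⟪sRefl α β, ϖv⟫ = -⟪β, coroot α⟫ := by
      rw [sRefl, inner_sub_left, real_inner_smul_left, hαϖ, h0]; ring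
    rw [hϖs] at hs
    linarith
  -- (F9) positive pairing with the coweight forces a positive root
  have hfilter : R.filter (fun β => 0 < ⟪β, ϖv⟫) = Rp.filter (fun β => 0 < ⟪β, ϖv⟫) := by
    ext β
    simp only [Finset.mem_filter]
    constructor
    · rintro ⟨hβ, hb⟩
      refine ⟨?_, hb⟩
      rcases hΔ.expand β hβ with ⟨c, hc⟩ | ⟨c, hc⟩
      · exact (hRp β).2 ⟨hβ, c, hc⟩
      · exfalso
        rw [hc, inner_neg_left, coeff] at hb
        have : (0:ℝ) ≤ (c α : ℝ) := Nat.cast_nonneg _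
        linarith
    · rintro ⟨hβ, hb⟩
      exact ⟨((hRp β).1 hβ).1, hb⟩
  -- assemble
  have e1 : Rp.filter (fun β => ¬ 0 < ⟪β, ϖv⟫) = Rp.filter (fun β => ⟪β, ϖv⟫ = 0) := by
    apply Finset.filter_congr
    intro β hβ
    have := hRpnn β hβ
    constructor
    · intro h; linarith
    · intro h; rw [h]; simp
  have e2 : ∑ β ∈ Rp.filter (fun β => ⟪β, ϖv⟫ = 0 ∧ ⟪β, coroot α⟫ < 0), ⟪β, coroot α⟫
      = ∑ β ∈ Rp.filter (fun β => ⟪β, ϖv⟫ = 0), ⟪β, coroot α⟫ := by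
    rw [← Finset.filter_filter]
    refine Finset.sum_filter_of_ne ?_
    intro β hβ hne
    obtain ⟨hβRp, h0⟩ := Finset.mem_filter.mp hβ
    exact lt_of_le_of_ne (hF8 β hβRp h0) hne
  have hpart := Finset.sum_filter_add_sum_filter_not Rp (fun β => 0 < ⟪β, ϖv⟫)
    (fun β => ⟪β, coroot α⟫)
  rw [e1, sum_Rp] at hpart
  rw [hfilter, e2]
  linarith
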